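/- Let ε ∈ (1/(4π), 3/(4π)), so that |2(1 − 2πε)| < 1, i.e. 0 is an attracting fixed point of f_{δ₀}. Then there exist Δ₀ > 0 and λ ∈ (0,1) such that for every Δ with 0 < Δ ≤ Δ₀ and every Borel probability measure μ on 𝕋 whose support is contained in the image of the interval [−Δ, Δ] under the projection ℝ → 𝕋, the measure T_ε μ has support contained in the image of [−λΔ, λΔ]. -/

import Mathlib

open MeasureTheory

/-- The observable `y ↦ cos(2πy)` on the circle `𝕋 = ℝ/ℤ`. -/
noncomputable def cosObs : UnitAddCircle → ℝ :=
  AddCircle.liftIco 1 0 (fun x => Real.cos (2 * Real.pi * x))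

/-- The map `f_μ : 𝕋 → 𝕋` induced by `x ↦ 2(x − ε·sin(2πx)·∫ cos(2πy) dμ(y))`, arising from
mean-field coupled doubling maps with coupling `h(x,y) = sin(2πx)cos(2πy)`. -/
noncomputable def fMu (ε : ℝ) (μ : Measure UnitAddCircle) : UnitAddCircle → UnitAddCircle :=
  AddCircle.liftIco 1 0 (fun x =>
    (↑(2 * (x - ε * Real.sin (2 * Real.pi * x) * ∫ y, cosObs y ∂μ)) : UnitAddCircle))

/-- The self-consistent operator `T_ε μ = (f_μ)_* μ`. -/
noncomputable def Tsc (ε : ℝ) (μ : Measure UnitAddCircle) : Measure UnitAddCircle :=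
  μ.map (fMu ε μ)

lemma measurable_liftIco {B : Type*} [MeasurableSpace B] {f : ℝ → B} (hf : Measurable f) :
    Measurable (AddCircle.liftIco (1:ℝ) 0 f) := by
  have h : AddCircle.liftIco (1:ℝ) 0 f =
      (fun y : Set.Ico (0:ℝ) (0+1) => f y) ∘ (AddCircle.measurableEquivIco (T := 1) 0) := rfl
  rw [h]
  exact (hf.comp measurable_subtype_coe).comp
    (AddCircle.measurableEquivIco (T := 1) 0).measurable

lemma coe_int_add (x : ℝ) (n : ℤ) : ((x + n : ℝ) : UnitAddCircle) = (x : UnitAddCircle) := by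
  have h : ((x + n : ℝ) : UnitAddCircle) - (x : UnitAddCircle) = 0 := by
    rw [← AddCircle.coe_sub, AddCircle.coe_eq_zero_iff]
    exact ⟨n, by rw [zsmul_eq_mul, mul_one]; ring⟩
  exact sub_eq_zero.mp h

lemma coe_fract (x : ℝ) : ((Int.fract x : ℝ) : UnitAddCircle) = (x : UnitAddCircle) := by
  have harg : (Int.fract x + (⌊x⌋ : ℤ) : ℝ) = x := by rw [Int.fract]; push_cast; ring
  conv_rhs => rw [← harg]
  exact (coe_int_add _ _).symm

lemma cosObs_coe (x : ℝ) : cosObs (x : ℝ) = Real.cos (2 * Real.pi * x) := by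
  have hmem : Int.fract x ∈ Set.Ico (0:ℝ) (0 + 1) := by
    rw [zero_add]; exact Set.mem_Ico.mpr ⟨Int.fract_nonneg x, Int.fract_lt_one x⟩
  have h1 : ((Int.fract x : ℝ) : UnitAddCircle) = (x : UnitAddCircle) := coe_fract x
  rw [← h1, cosObs, AddCircle.liftIco_coe_apply hmem]
  have : 2 * Real.pi * Int.fract x = 2 * Real.pi * x + (-⌊x⌋ : ℤ) * (2 * Real.pi) := by
    rw [Int.fract]; push_cast; ring
  rw [this, Real.cos_add_int_mul_two_pi]

lemma fMu_coe (ε : ℝ) (μ : Measure UnitAddCircle) (x : ℝ) :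
    fMu ε μ (x : ℝ) =
      ((2 * (x - ε * Real.sin (2 * Real.pi * x) * ∫ y, cosObs y ∂μ) : ℝ) : UnitAddCircle) := by
  have hmem : Int.fract x ∈ Set.Ico (0:ℝ) (0 + 1) := by
    rw [zero_add]; exact Set.mem_Ico.mpr ⟨Int.fract_nonneg x, Int.fract_lt_one x⟩
  have h1 : ((Int.fract x : ℝ) : UnitAddCircle) = (x : UnitAddCircle) := coe_fract x
  rw [← h1, fMu, AddCircle.liftIco_coe_apply hmem]
  have hsin : Real.sin (2 * Real.pi * Int.fract x) = Real.sin (2 * Real.pi * x) := by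
    have : 2 * Real.pi * Int.fract x = 2 * Real.pi * x + (-⌊x⌋ : ℤ) * (2 * Real.pi) := by
      rw [Int.fract]; push_cast; ring
    rw [this, Real.sin_add_int_mul_two_pi]
  rw [hsin]
  have : (2 * (Int.fract x - ε * Real.sin (2 * Real.pi * x) * ∫ y, cosObs y ∂μ) : ℝ)
      = 2 * (x - ε * Real.sin (2 * Real.pi * x) * ∫ y, cosObs y ∂μ) + ((-2 * ⌊x⌋ : ℤ) : ℝ) := by
    rw [Int.fract]; push_cast; ring
  rw [this, coe_int_add]

set_option maxHeartbeats 1000000 in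
/-- Key real-variable estimate. -/
lemma key_estimate (ε m x Δ : ℝ) (hε0 : 0 < ε) (hεu : 2 * Real.pi * ε < 3/2)
    (hΔ0 : 0 < Δ) (hΔ : Δ ≤ 1/8) (hm1 : m ≤ 1)
    (hm0 : 1 - (2 * Real.pi * Δ)^2 / 2 ≤ m) (hx : |x| ≤ Δ) :
    |2 * (x - ε * Real.sin (2 * Real.pi * x) * m)| ≤ (|2 * (1 - 2 * Real.pi * ε)| + 90 * Δ^2) * Δ := by
  have pi_pos := Real.pi_pos
  have pi_lt : Real.pi < 3.15 := Real.pi_lt_d2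
  have pi_gt : 3 < Real.pi := Real.pi_gt_three
  -- reduce to x ≥ 0 by oddness
  suffices H : ∀ z : ℝ, 0 ≤ z → z ≤ Δ →
      |2 * (z - ε * Real.sin (2 * Real.pi * z) * m)| ≤ (|2 * (1 - 2 * Real.pi * ε)| + 90 * Δ^2) * Δ by
    rcases le_or_gt 0 x with hx0 | hx0
    · exact H x hx0 (by rwa [abs_of_nonneg hx0] at hx)
    · have h1 : 2 * (x - ε * Real.sin (2 * Real.pi * x) * m)
          = -(2 * ((-x) - ε * Real.sin (2 * Real.pi * (-x)) * m)) := by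
        have : Real.sin (2 * Real.pi * (-x)) = - Real.sin (2 * Real.pi * x) := by
          rw [show 2 * Real.pi * (-x) = -(2 * Real.pi * x) by ring, Real.sin_neg]
        rw [this]; ring
      rw [h1, abs_neg]
      exact H (-x) (by linarith) (by rwa [abs_of_neg hx0] at hx)
  intro z hz0 hzΔ
  set t := 2 * Real.pi * z with ht
  have ht0 : 0 ≤ t := by positivity
  have htΔ : t ≤ 2 * Real.pi * Δ := by
    have := mul_le_mul_of_nonneg_left hzΔ (le_of_lt (by positivity : (0:ℝ) < 2 * Real.pi))
    simpa [ht] using this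
  have ht1 : t ≤ 1 := by nlinarith
  -- sin bounds
  have hsin_le : Real.sin t ≤ t := Real.sin_le ht0
  have hsin_ge : t - t^3/4 ≤ Real.sin t := by
    rcases eq_or_lt_of_le ht0 with h | h
    · simp [← h]
    · have := Real.sin_gt_sub_cube h; nlinarith [pow_pos h 3]
  have hq1 : 2 * Real.pi * Δ ≤ 1 := by nlinarith
  have hq2 : (2 * Real.pi * Δ)^2 ≤ 1 := by nlinarith [mul_pos (mul_pos (by norm_num : (0:ℝ)<2) pi_pos) hΔ0]
  have hm_lb : (0:ℝ) ≤ m := by nlinarith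
  -- decompose
  have hdec : 2 * (z - ε * Real.sin t * m)
      = 2 * z * (1 - 2 * Real.pi * ε * m) + 2 * ε * m * (t - Real.sin t) := by
    rw [ht]; ring
  rw [hdec]
  have h1 : |2 * z * (1 - 2 * Real.pi * ε * m)| ≤ 2 * Δ * (|1 - 2 * Real.pi * ε| + (3/4) * (2 * Real.pi * Δ)^2) := by
    rw [abs_mul]
    have hz : |2 * z| ≤ 2 * Δ := by rw [abs_of_nonneg (by linarith)]; linarith
    have hb : |1 - 2 * Real.pi * ε * m| ≤ |1 - 2 * Real.pi * ε| + (3/4) * (2 * Real.pi * Δ)^2 := by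
      have : 1 - 2 * Real.pi * ε * m = (1 - 2 * Real.pi * ε) + 2 * Real.pi * ε * (1 - m) := by ring
      rw [this]
      refine (abs_add_le _ _).trans ?_
      have hpe : 0 < 2 * Real.pi * ε := by positivity
      have h2 : |2 * Real.pi * ε * (1 - m)| ≤ (3/4) * (2 * Real.pi * Δ)^2 := by
        rw [abs_of_nonneg (mul_nonneg hpe.le (by linarith))]
        nlinarith [sq_nonneg (2 * Real.pi * Δ)]
      linarith
    calc |2 * z| * |1 - 2 * Real.pi * ε * m|
        ≤ (2 * Δ) * (|1 - 2 * Real.pi * ε| + (3/4) * (2 * Real.pi * Δ)^2) := by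
          apply mul_le_mul hz hb (abs_nonneg _) (by linarith)
      _ = _ := rfl
  have h2 : |2 * ε * m * (t - Real.sin t)| ≤ 2 * ε * (2 * Real.pi * Δ)^3 / 4 := by
    have hnn : 0 ≤ 2 * ε * m * (t - Real.sin t) :=
      mul_nonneg (mul_nonneg (by linarith) hm_lb) (by linarith)
    rw [abs_of_nonneg hnn]
    have hts : t - Real.sin t ≤ t^3/4 := by linarith
    have ht3 : t^3 ≤ (2 * Real.pi * Δ)^3 := by
      have := pow_le_pow_left₀ ht0 htΔ 3
      simpa using this
    have hεm : 2 * ε * m ≤ 2 * ε * 1 := by nlinarith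
    calc 2 * ε * m * (t - Real.sin t) ≤ (2 * ε * 1) * (t^3/4) :=
          mul_le_mul hεm hts (by linarith) (by linarith)
      _ ≤ 2 * ε * (2 * Real.pi * Δ)^3 / 4 := by
          rw [mul_one]
          have := mul_le_mul_of_nonneg_left ht3 (by linarith : (0:ℝ) ≤ 2 * ε)
          linarith
  have habs2 : |2 * (1 - 2 * Real.pi * ε)| = 2 * |1 - 2 * Real.pi * ε| := by
    rw [abs_mul, abs_of_nonneg (by norm_num : (0:ℝ) ≤ 2)]
  calc |2 * z * (1 - 2 * Real.pi * ε * m) + 2 * ε * m * (t - Real.sin t)|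
      ≤ |2 * z * (1 - 2 * Real.pi * ε * m)| + |2 * ε * m * (t - Real.sin t)| := abs_add_le _ _
    _ ≤ 2 * Δ * (|1 - 2 * Real.pi * ε| + (3/4) * (2 * Real.pi * Δ)^2) + 2 * ε * (2 * Real.pi * Δ)^3 / 4 := by
        linarith
    _ ≤ (|2 * (1 - 2 * Real.pi * ε)| + 90 * Δ^2) * Δ := by
        rw [habs2]
        have hπ2 : Real.pi^2 ≤ 10 := by nlinarith
        have hε' : 4 * Real.pi * ε ≤ 3 := by nlinarith
        have hΔ3 : (0:ℝ) < Δ^3 := pow_pos hΔ0 3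
        have f1 : Real.pi^2 * Δ^3 ≤ 10 * Δ^3 := by nlinarith
        have f2 : (4 * Real.pi * ε) * (Real.pi^2 * Δ^3) ≤ 3 * (Real.pi^2 * Δ^3) :=
          mul_le_mul_of_nonneg_right hε' (mul_nonneg (sq_nonneg _) hΔ3.le)
        nlinarith [abs_nonneg (1 - 2 * Real.pi * ε)]
    
set_option maxHeartbeats 1000000 in
/-- For `ε ∈ (1/(4π), 3/(4π))` there are `Δ₀ > 0` and `λ ∈ (0,1)` such that any probability
measure supported in the projection of `[−Δ, Δ]` (with `0 < Δ ≤ Δ₀`) is mapped by `T_ε` to a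
measure supported in the projection of `[−λΔ, λΔ]`. -/
theorem stmt15 (ε : ℝ) (hε₁ : 1 / (4 * Real.pi) < ε) (hε₂ : ε < 3 / (4 * Real.pi)) :
    ∃ Δ₀ > (0:ℝ), ∃ lam : ℝ, 0 < lam ∧ lam < 1 ∧
      ∀ Δ : ℝ, 0 < Δ → Δ ≤ Δ₀ →
        ∀ μ : Measure UnitAddCircle, IsProbabilityMeasure μ →
          μ (((fun x : ℝ => (x : UnitAddCircle)) '' Set.Icc (-Δ) Δ)ᶜ) = 0 →
          Tsc ε μ (((fun x : ℝ => (x : UnitAddCircle)) '' Set.Icc (-(lam * Δ)) (lam * Δ))ᶜ) = 0 := by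
  have pi_pos := Real.pi_pos
  have hεpos : 0 < ε := lt_trans (by positivity) hε₁
  have h4 : 1 < ε * (4 * Real.pi) := (div_lt_iff₀ (by positivity)).mp hε₁
  have h5 : ε * (4 * Real.pi) < 3 := (lt_div_iff₀ (by positivity)).mp hε₂
  set a₀ : ℝ := |2 * (1 - 2 * Real.pi * ε)| with ha₀
  have ha₀nn : 0 ≤ a₀ := abs_nonneg _
  have ha₀lt : a₀ < 1 := by
    rw [ha₀, abs_lt]; constructor <;> nlinarith
  have hεu : 2 * Real.pi * ε < 3/2 := by nlinarith
  refine ⟨min (1/8 : ℝ) (Real.sqrt ((1 - a₀)/180)),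
    lt_min (by norm_num) (Real.sqrt_pos.mpr (by linarith)), (1 + a₀)/2,
    by linarith, by linarith, ?_⟩
  intro Δ hΔ0 hΔΔ₀ μ hprob hsupp
  have hΔ18 : Δ ≤ 1/8 := le_trans hΔΔ₀ (min_le_left _ _)
  have hΔsq : Δ^2 ≤ (1 - a₀)/180 :=
    (Real.le_sqrt hΔ0.le (by linarith)).mp (le_trans hΔΔ₀ (min_le_right _ _))
  set m := ∫ y, cosObs y ∂μ with hm
  -- measurability
  have hmcos : Measurable cosObs :=
    measurable_liftIco (Real.continuous_cos.comp (continuous_const.mul continuous_id)).measurable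
  have hcoe : Continuous (fun x : ℝ => (x : UnitAddCircle)) := AddCircle.continuous_mk' 1
  have hmf : Measurable (fMu ε μ) := by
    apply measurable_liftIco
    exact (hcoe.comp (by continuity)).measurable
  -- pointwise bounds for cosObs
  have hptle : ∀ q : UnitAddCircle, cosObs q ≤ 1 := by
    intro q
    induction q using QuotientAddGroup.induction_on with
    | H x => rw [cosObs_coe]; exact Real.cos_le_one _
  have hptabs : ∀ q : UnitAddCircle, |cosObs q| ≤ 1 := by
    intro q
    induction q using QuotientAddGroup.induction_on with
    | H x => rw [cosObs_coe]; exact Real.abs_cos_le_one _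
  have hint : Integrable cosObs μ := by
    apply Integrable.mono' (integrable_const (1:ℝ)) hmcos.aestronglyMeasurable
    exact Filter.Eventually.of_forall (fun q => by simpa using hptabs q)
  have hm1 : m ≤ 1 := by
    calc m ≤ ∫ _, (1:ℝ) ∂μ := integral_mono hint (integrable_const _) hptle
      _ = 1 := by simp
  have hm0 : 1 - (2 * Real.pi * Δ)^2 / 2 ≤ m := by
    have hae : ∀ᵐ q ∂μ, 1 - (2 * Real.pi * Δ)^2 / 2 ≤ cosObs q := by
      rw [MeasureTheory.ae_iff]
      refine measure_mono_null ?_ hsupp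
      intro q hq
      simp only [Set.mem_setOf_eq, not_le] at hq
      simp only [Set.mem_compl_iff]
      intro hqS
      obtain ⟨x, hx, rfl⟩ := hqS
      rw [cosObs_coe] at hq
      have h1 : 1 - (2 * Real.pi * x)^2 / 2 ≤ Real.cos (2 * Real.pi * x) :=
        Real.one_sub_sq_div_two_le_cos
      have hx2 : x^2 ≤ Δ^2 := by
        obtain ⟨hxl, hxr⟩ := hx; nlinarith
      nlinarith [sq_nonneg Real.pi]
    calc 1 - (2 * Real.pi * Δ)^2 / 2 = ∫ _, (1 - (2 * Real.pi * Δ)^2 / 2 : ℝ) ∂μ := by simp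
      _ ≤ m := integral_mono_ae (integrable_const _) hint hae
  -- target set is measurable
  have hTmeas : MeasurableSet (((fun x : ℝ => (x : UnitAddCircle)) ''
      Set.Icc (-((1 + a₀)/2 * Δ)) ((1 + a₀)/2 * Δ))ᶜ) :=
    ((isCompact_Icc.image hcoe).isClosed.measurableSet).compl
  rw [Tsc, Measure.map_apply hmf hTmeas]
  refine measure_mono_null ?_ hsupp
  intro q hq
  simp only [Set.mem_preimage, Set.mem_compl_iff] at hq
  simp only [Set.mem_compl_iff]
  intro hqS
  apply hq
  obtain ⟨x, hx, rfl⟩ := hqS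
  rw [fMu_coe]
  refine ⟨2 * (x - ε * Real.sin (2 * Real.pi * x) * m), ?_, rfl⟩
  rw [Set.mem_Icc, ← abs_le]
  have hxabs : |x| ≤ Δ := abs_le.mpr ⟨hx.1, hx.2⟩
  have hkey := key_estimate ε m x Δ hεpos hεu hΔ0 hΔ18 hm1 hm0 hxabs
  refine hkey.trans ?_
  have : a₀ + 90 * Δ^2 ≤ (1 + a₀)/2 := by nlinarith
  nlinarith
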